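/- arXiv:2308.10688 — 6 statements merged into one kernel-verified Lean document; each statement's English description precedes it below -/
import Mathlib

section
/- Let a, b be complex numbers with |a||b| ≠ 1 and such that the lines L(a, 1/b̄) and L(b, 1/ā) are non-parallel. Then their intersection point equals (a(1-|b|²) + b(1-|a|²))/(1 - |a|²|b|²). -/
open ComplexConjugate

/-- The Euclidean line through two points of the complex plane,
viewed as a real affine subspace. -/
def lineThrough (x y : ℂ) : Set ℂ := ↑(affineSpan ℝ ({x, y} : Set ℂ))

lemma mem_lineThrough (x y : ℂ) (t : ℝ) : x + t • (y - x) ∈ lineThrough x y := by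
  have := (affineSpan ℝ ({x, y} : Set ℂ)).smul_vsub_vadd_mem t
    (right_mem_affineSpan_pair ℝ x y) (left_mem_affineSpan_pair ℝ x y)
    (left_mem_affineSpan_pair ℝ x y)
  simpa [lineThrough, vsub_eq_sub, vadd_eq_add, add_comm] using this

lemma sq_abs_eq (z : ℂ) : (((‖z‖ : ℝ) : ℂ)) ^ 2 = z * conj z := by
  rw [Complex.mul_conj]
  norm_cast
  exact Complex.sq_norm z

/-- Proposition (LIS, case 3): the intersection of the line through `a, 1/b̄`
with the line through `b, 1/ā`.  Non-parallelism of the two lines is encoded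
by the hypothesis that they meet in exactly one point. -/
theorem stmt2 (a b : ℂ) (hab1 : a ≠ 1 / conj b) (hab2 : b ≠ 1 / conj a)
    (hprod : ‖a‖ * ‖b‖ ≠ 1)
    (hnp : ∃! z : ℂ, z ∈ lineThrough a (1 / conj b) ∧ z ∈ lineThrough b (1 / conj a)) :
    (a * (1 - ((‖b‖ : ℝ) : ℂ) ^ 2) + b * (1 - ((‖a‖ : ℝ) : ℂ) ^ 2)) /
        (1 - ((‖a‖ : ℝ) : ℂ) ^ 2 * ((‖b‖ : ℝ) : ℂ) ^ 2) ∈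
        lineThrough a (1 / conj b) ∧
    (a * (1 - ((‖b‖ : ℝ) : ℂ) ^ 2) + b * (1 - ((‖a‖ : ℝ) : ℂ) ^ 2)) /
        (1 - ((‖a‖ : ℝ) : ℂ) ^ 2 * ((‖b‖ : ℝ) : ℂ) ^ 2) ∈
        lineThrough b (1 / conj a) := by
  have hD : (1 : ℂ) - ((‖a‖ : ℝ) : ℂ) ^ 2 * ((‖b‖ : ℝ) : ℂ) ^ 2 ≠ 0 := by
    have h1 : (‖a‖ * ‖b‖) ^ 2 ≠ 1 := by
      intro h
      apply hprod
      have hx : 0 ≤ ‖a‖ * ‖b‖ :=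
        mul_nonneg (norm_nonneg a) (norm_nonneg b)
      have h' : (‖a‖ * ‖b‖ - 1) * (‖a‖ * ‖b‖ + 1) = 0 := by
        linear_combination h
      rcases mul_eq_zero.mp h' with h'' | h'' <;> linarith
    intro h
    apply h1
    have : (((‖a‖ : ℝ) : ℂ) * ((‖b‖ : ℝ) : ℂ)) ^ 2 = 1 := by
      rw [mul_pow]; linear_combination -h
    exact_mod_cast this
  constructor
  · -- line through a and 1/conj b
    rcases eq_or_ne b 0 with hb | hb
    · -- then the point is a, which is on the line
      have : (a * (1 - ((‖b‖ : ℝ) : ℂ) ^ 2) + b * (1 - ((‖a‖ : ℝ) : ℂ) ^ 2)) /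
          (1 - ((‖a‖ : ℝ) : ℂ) ^ 2 * ((‖b‖ : ℝ) : ℂ) ^ 2) = a := by
        simp [hb]
      rw [this]
      exact left_mem_affineSpan_pair ℝ _ _
    · have hcb : conj b ≠ 0 := by simpa using hb
      have key : a + ((1 - ‖a‖ ^ 2) * ‖b‖ ^ 2 /
            (1 - ‖a‖ ^ 2 * ‖b‖ ^ 2) : ℝ) • (1 / conj b - a) =
          (a * (1 - ((‖b‖ : ℝ) : ℂ) ^ 2) + b * (1 - ((‖a‖ : ℝ) : ℂ) ^ 2)) /
            (1 - ((‖a‖ : ℝ) : ℂ) ^ 2 * ((‖b‖ : ℝ) : ℂ) ^ 2) := by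
        have hDr : ((1 - ‖a‖ ^ 2 * ‖b‖ ^ 2 : ℝ) : ℂ) ≠ 0 := by
          push_cast; exact hD
        rw [Complex.real_smul]
        push_cast
        rw [sq_abs_eq a, sq_abs_eq b]
        rw [sq_abs_eq a, sq_abs_eq b] at hD
        have hD' : 1 - a * conj a * b * conj b ≠ 0 := by rw [mul_assoc (a * conj a)]; exact hD
        field_simp
        ring
      rw [← key]
      exact mem_lineThrough _ _ _
  · rcases eq_or_ne a 0 with ha | ha
    · have : (a * (1 - ((‖b‖ : ℝ) : ℂ) ^ 2) + b * (1 - ((‖a‖ : ℝ) : ℂ) ^ 2)) /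
          (1 - ((‖a‖ : ℝ) : ℂ) ^ 2 * ((‖b‖ : ℝ) : ℂ) ^ 2) = b := by
        simp [ha]
      rw [this]
      exact left_mem_affineSpan_pair ℝ _ _
    · have hca : conj a ≠ 0 := by simpa using ha
      have key : b + ((1 - ‖b‖ ^ 2) * ‖a‖ ^ 2 /
            (1 - ‖a‖ ^ 2 * ‖b‖ ^ 2) : ℝ) • (1 / conj a - b) =
          (a * (1 - ((‖b‖ : ℝ) : ℂ) ^ 2) + b * (1 - ((‖a‖ : ℝ) : ℂ) ^ 2)) /
            (1 - ((‖a‖ : ℝ) : ℂ) ^ 2 * ((‖b‖ : ℝ) : ℂ) ^ 2) := by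
        rw [Complex.real_smul]
        push_cast
        rw [sq_abs_eq a, sq_abs_eq b]
        rw [sq_abs_eq a, sq_abs_eq b] at hD
        have hD' : 1 - b * conj b * a * conj a ≠ 0 := by intro h; apply hD; linear_combination h
        field_simp
        ring
      rw [← key]
      exact mem_lineThrough _ _ _
end

section
/- Let a, b be complex numbers with |a||b| ≠ 1 and such that the lines L(a, -1/b̄) and L(b, -1/ā) are non-parallel. Then their intersection point equals (a(1+|b|²) + b(1+|a|²))/(1 - |a|²|b|²). -/
open ComplexConjugate

lemma sqabs (z : ℂ) : (‖z‖ : ℂ)^2 = z * conj z := by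
  rw [Complex.mul_conj]; norm_cast; rw [Complex.sq_norm]

lemma key (a b : ℂ) (hprod : ‖a‖ * ‖b‖ ≠ 1) :
    (a * (1 + (‖b‖ : ℂ) ^ 2) + b * (1 + (‖a‖ : ℂ) ^ 2)) /
        (1 - (‖a‖ : ℂ) ^ 2 * (‖b‖ : ℂ) ^ 2) ∈
        lineThrough a (-1 / conj b) := by
  have hD : (1 : ℝ) - (‖a‖)^2 * (‖b‖)^2 ≠ 0 := by
    intro h
    apply hprod
    have h' : (‖a‖ * ‖b‖ - 1) * (‖a‖ * ‖b‖ + 1) = 0 := by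
      nlinarith
    rcases mul_eq_zero.1 h' with h'' | h''
    · linarith
    · nlinarith [mul_nonneg (norm_nonneg a) (norm_nonneg b)]
  have hDC : (1 : ℂ) - (‖a‖ : ℂ)^2 * (‖b‖ : ℂ)^2 ≠ 0 := by
    exact_mod_cast fun h => hD (by exact_mod_cast h)
  rw [lineThrough, SetLike.mem_coe]
  rcases eq_or_ne b 0 with hb | hb
  · have : (a * (1 + (‖b‖ : ℂ) ^ 2) + b * (1 + (‖a‖ : ℂ) ^ 2)) /
        (1 - (‖a‖ : ℂ) ^ 2 * (‖b‖ : ℂ) ^ 2) = a := by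
      simp [hb]
    rw [this]
    exact left_mem_affineSpan_pair ℝ _ _
  · have hcb : conj b ≠ 0 := by simpa using hb
    set r : ℝ := -(1+(‖a‖)^2)*(‖b‖)^2/(1-(‖a‖)^2*(‖b‖)^2)
    have heq : (a * (1 + (‖b‖ : ℂ) ^ 2) + b * (1 + (‖a‖ : ℂ) ^ 2)) /
        (1 - (‖a‖ : ℂ) ^ 2 * (‖b‖ : ℂ) ^ 2)
        = r • ((-1 / conj b) -ᵥ a) +ᵥ a := by
      simp only [vsub_eq_sub, vadd_eq_add, Complex.real_smul, r]
      push_cast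
      field_simp
      rw [sqabs a, sqabs b] at hDC ⊢
      have hD' : 1 - a * b * conj b * conj a ≠ 0 := by convert hDC using 1; ring
      linear_combination a * conj b * (inv_mul_cancel₀ hD')
    rw [heq]
    exact smul_vsub_vadd_mem_affineSpan_pair r _ _

/-- Proposition (LIS, case 4): the intersection of the line through `a, -1/b̄`
with the line through `b, -1/ā`.  Non-parallelism of the two lines is encoded
by the hypothesis that they meet in exactly one point. -/
theorem stmt3 (a b : ℂ) (hab1 : a ≠ -1 / conj b) (hab2 : b ≠ -1 / conj a)
    (hprod : ‖a‖ * ‖b‖ ≠ 1)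
    (hnp : ∃! z : ℂ, z ∈ lineThrough a (-1 / conj b) ∧ z ∈ lineThrough b (-1 / conj a)) :
    (a * (1 + (‖b‖ : ℂ) ^ 2) + b * (1 + (‖a‖ : ℂ) ^ 2)) /
        (1 - (‖a‖ : ℂ) ^ 2 * (‖b‖ : ℂ) ^ 2) ∈
        lineThrough a (-1 / conj b) ∧
    (a * (1 + (‖b‖ : ℂ) ^ 2) + b * (1 + (‖a‖ : ℂ) ^ 2)) /
        (1 - (‖a‖ : ℂ) ^ 2 * (‖b‖ : ℂ) ^ 2) ∈
        lineThrough b (-1 / conj a) := by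
  constructor
  · exact key a b hprod
  · have h := key b a (by rw [mul_comm]; exact hprod)
    convert h using 2 <;> ring
end

section
/- For a in the open unit disk 𝔹² ⊂ ℂ, the map T_a(z) = (z - a)/(1 - āz) restricted to 𝔹² is Lipschitz with respect to the Euclidean metric with best Lipschitz constant (1 + |a|)/(1 - |a|); that is, |T_a(x) - T_a(y)| ≤ ((1+|a|)/(1-|a|))|x - y| for all x, y ∈ 𝔹², and this constant cannot be improved. -/
open ComplexConjugate Topology Filter

-- denominator nonzero
lemma aux_ne (a z : ℂ) (ha : ‖a‖ < 1) (hz : ‖z‖ < 1) :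
    1 - conj a * z ≠ 0 := by
  intro h
  have : ‖conj a * z‖ = 1 := by
    have : conj a * z = 1 := by linear_combination -h
    rw [this]; simp
  rw [norm_mul, Complex.norm_conj] at this
  nlinarith [norm_nonneg z, norm_nonneg a]

lemma aux_key (a x y : ℂ) (hx : 1 - conj a * x ≠ 0) (hy : 1 - conj a * y ≠ 0) :
    (x - a) / (1 - conj a * x) - (y - a) / (1 - conj a * y) =
      (1 - conj a * a) * (x - y) / ((1 - conj a * x) * (1 - conj a * y)) := by
  rw [div_sub_div _ _ hx hy]
  congr 1
  ring

lemma aux_den (a z : ℂ) (ha : ‖a‖ < 1) (hz : ‖z‖ < 1) :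
    1 - ‖a‖ ≤ ‖1 - conj a * z‖ := by
  have h1 : ‖(1:ℂ)‖ - ‖conj a * z‖ ≤ ‖1 - conj a * z‖ :=
    norm_sub_norm_le _ _
  rw [norm_mul, Complex.norm_conj, norm_one] at h1
  nlinarith [norm_nonneg z, norm_nonneg a, norm_nonneg (1 - conj a * z)]

lemma aux_lip (a : ℂ) (ha : ‖a‖ < 1) (x y : ℂ)
    (hx : ‖x‖ < 1) (hy : ‖y‖ < 1) :
    ‖(x - a) / (1 - conj a * x) - (y - a) / (1 - conj a * y)‖ ≤
      (1 + ‖a‖) / (1 - ‖a‖) * ‖x - y‖ := by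
  set r := ‖a‖ with hr
  have hr0 : 0 ≤ r := norm_nonneg a
  have hdx := aux_ne a x ha hx
  have hdy := aux_ne a y ha hy
  rw [aux_key a x y hdx hdy]
  have hnum : ‖1 - conj a * a‖ = 1 - r ^ 2 := by
    have : 1 - conj a * a = ((1 - r ^ 2 : ℝ) : ℂ) := by
      rw [Complex.conj_mul']
      push_cast; ring
    rw [this, Complex.norm_real, Real.norm_eq_abs, abs_of_nonneg (by nlinarith)]
  rw [norm_div, norm_mul, norm_mul, hnum]
  have hbx := aux_den a x ha hx
  have hby := aux_den a y ha hy
  have h1r : (0:ℝ) < 1 - r := by linarith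
  have key : (1 - r ^ 2) * ‖x - y‖ / (‖1 - conj a * x‖ * ‖1 - conj a * y‖)
      ≤ (1 - r ^ 2) * ‖x - y‖ / ((1 - r) * (1 - r)) := by
    apply div_le_div_of_nonneg_left
    · exact mul_nonneg (by nlinarith) (norm_nonneg _)
    · positivity
    · exact mul_le_mul hbx hby h1r.le (norm_nonneg _)
  refine key.trans (le_of_eq ?_)
  field_simp
  ring

lemma aux_num (a : ℂ) (ha : ‖a‖ < 1) :
    ‖1 - conj a * a‖ = 1 - ‖a‖ ^ 2 := by
  have hr0 := norm_nonneg a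
  have : 1 - conj a * a = ((1 - ‖a‖ ^ 2 : ℝ) : ℂ) := by
    rw [Complex.conj_mul']
    push_cast; ring
  rw [this, Complex.norm_real, Real.norm_eq_abs, abs_of_nonneg (by nlinarith)]

lemma aux_sharp (a : ℂ) (ha : ‖a‖ < 1) (K : ℝ)
    (h : ∀ x y : ℂ, ‖x‖ < 1 → ‖y‖ < 1 →
        ‖(x - a) / (1 - conj a * x) - (y - a) / (1 - conj a * y)‖ ≤
          K * ‖x - y‖) :
    (1 + ‖a‖) / (1 - ‖a‖) ≤ K := by
  set r := ‖a‖ with hr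
  have hr0 : 0 ≤ r := norm_nonneg a
  have h1r : (0:ℝ) < 1 - r := by linarith
  set u : ℂ := if a = 0 then 1 else a / (r : ℂ) with hu_def
  have hu : ‖u‖ = 1 := by
    rw [hu_def]; split_ifs with h0
    · simp
    · have hrne : r ≠ 0 := norm_ne_zero_iff.mpr h0
      rw [norm_div, Complex.norm_real, Real.norm_eq_abs, abs_of_nonneg hr0, ← hr, div_self hrne]
  have hau : conj a * u = (r : ℂ) := by
    rw [hu_def]; split_ifs with h0
    · simp [hr, h0]
    · have hrne : (r:ℂ) ≠ 0 := by
        exact_mod_cast norm_ne_zero_iff.mpr h0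
      have h2 : conj a * a = ((r:ℂ))^2 := by
        rw [Complex.conj_mul']
      field_simp
      linear_combination h2
  have hnum := aux_num a ha
  have key : ∀ t ∈ Set.Ioo (0:ℝ) 1,
      (1 - r^2) / ((1 - t*r) * (1 - (1+t)/2*r)) ≤ K := by
    intro t ht
    obtain ⟨ht0, ht1⟩ := ht
    set s : ℝ := (1+t)/2 with hs_def
    have hs0 : 0 < s := by rw [hs_def]; linarith
    have hs1 : s < 1 := by rw [hs_def]; linarith
    have hts : t < s := by rw [hs_def]; linarith
    have habs : ∀ c : ℝ, 0 ≤ c → ‖↑c * u‖ = c := fun c hc => by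
      rw [norm_mul, Complex.norm_real, Real.norm_eq_abs, hu, mul_one, abs_of_nonneg hc]
    have hx1 : ‖↑t * u‖ < 1 := by rw [habs t ht0.le]; exact ht1
    have hy1 : ‖↑s * u‖ < 1 := by rw [habs s hs0.le]; exact hs1
    have hdx : ‖1 - conj a * (↑t * u)‖ = 1 - t*r := by
      rw [show conj a * ((t:ℂ) * u) = ((t*r : ℝ):ℂ) by
        push_cast; linear_combination (t:ℂ) * hau]
      rw [show (1:ℂ) - ((t*r:ℝ):ℂ) = ((1 - t*r : ℝ):ℂ) by push_cast; ring,
        Complex.norm_real, Real.norm_eq_abs, abs_of_nonneg (by nlinarith)]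
    have hdy : ‖1 - conj a * (↑s * u)‖ = 1 - s*r := by
      rw [show conj a * ((s:ℂ) * u) = ((s*r : ℝ):ℂ) by
        push_cast; linear_combination (s:ℂ) * hau]
      rw [show (1:ℂ) - ((s*r:ℝ):ℂ) = ((1 - s*r : ℝ):ℂ) by push_cast; ring,
        Complex.norm_real, Real.norm_eq_abs, abs_of_nonneg (by nlinarith)]
    have hxy : ‖(t:ℂ) * u - (s:ℂ) * u‖ = s - t := by
      rw [show (t:ℂ)*u - (s:ℂ)*u = ((t-s:ℝ):ℂ)*u by push_cast; ring,
        norm_mul, Complex.norm_real, Real.norm_eq_abs, hu, mul_one, abs_sub_comm,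
        abs_of_nonneg (by linarith)]
    have H := h ((t:ℂ) * u) ((s:ℂ) * u) hx1 hy1
    rw [aux_key a _ _ (aux_ne a _ ha hx1) (aux_ne a _ ha hy1), norm_div, norm_mul,
      norm_mul, hnum, hdx, hdy, hxy, mul_div_right_comm] at H
    exact le_of_mul_le_mul_right H (by linarith)
  have hcont : Filter.Tendsto (fun t : ℝ => (1 - r^2) / ((1 - t*r) * (1 - (1+t)/2*r)))
      (nhdsWithin 1 (Set.Iio 1)) (𝓝 ((1+r)/(1-r))) := by
    have hne : (1 - 1*r) * (1 - (1+1)/2*r) ≠ 0 := by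
      have : (0:ℝ) < (1 - 1*r) * (1 - (1+1)/2*r) := by nlinarith
      exact ne_of_gt this
    have hc : ContinuousAt (fun t : ℝ => (1 - r^2) / ((1 - t*r) * (1 - (1+t)/2*r))) 1 := by
      apply ContinuousAt.div
      · fun_prop
      · fun_prop
      · exact hne
    have hval : (1 - r^2) / ((1 - r) * (1 - r)) = (1+r)/(1-r) := by
      field_simp
      ring
    have h2 := hc.tendsto.mono_left (nhdsWithin_le_nhds (s := Set.Iio (1:ℝ)))
    simpa [hval] using h2
  have hmem : Set.Ioo (0:ℝ) 1 ∈ nhdsWithin (1:ℝ) (Set.Iio 1) :=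
    Ioo_mem_nhdsLT_of_mem (by norm_num [Set.mem_Ioc])
  exact le_of_tendsto hcont (Filter.eventually_of_mem hmem key)

/-- `T_a(z) = (z-a)/(1-āz)` is Lipschitz on the unit disk with best constant
`(1+|a|)/(1-|a|)` in the Euclidean metric. -/
theorem stmt7 (a : ℂ) (ha : ‖a‖ < 1) :
    (∀ x y : ℂ, ‖x‖ < 1 → ‖y‖ < 1 →
      ‖(x - a) / (1 - conj a * x) - (y - a) / (1 - conj a * y)‖ ≤
        (1 + ‖a‖) / (1 - ‖a‖) * ‖x - y‖) ∧
    ∀ K : ℝ,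
      (∀ x y : ℂ, ‖x‖ < 1 → ‖y‖ < 1 →
        ‖(x - a) / (1 - conj a * x) - (y - a) / (1 - conj a * y)‖ ≤
          K * ‖x - y‖) →
      (1 + ‖a‖) / (1 - ‖a‖) ≤ K := by
  exact ⟨fun x y hx hy => aux_lip a ha x y hx hy, fun K hK => aux_sharp a ha K hK⟩
end

section
/- If a, b lie in the open unit disk 𝔹² ⊂ ℂ, then their chordal midpoint m = (a(1+|b|²) + b(1+|a|²)) / (|1 + a b̄|·√((1+|a|²)(1+|b|²)) - |ab|² + 1) also lies in 𝔹². -/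
open ComplexConjugate

set_option maxHeartbeats 1600000 in
/-- If `a, b` lie in the open unit disk, so does their chordal midpoint `m`. -/
theorem stmt12 (a b : ℂ) (ha : ‖a‖ < 1) (hb : ‖b‖ < 1)
    (m : ℂ)
    (hm : m = (a * (1 + (‖b‖ : ℂ) ^ 2) + b * (1 + (‖a‖ : ℂ) ^ 2)) /
      ((‖1 + a * conj b‖ *
          Real.sqrt ((1 + ‖a‖ ^ 2) * (1 + ‖b‖ ^ 2)) -
          ‖a * b‖ ^ 2 + 1 : ℝ) : ℂ)) :
    ‖m‖ < 1 := by
  set x := ‖a‖ with hxdef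
  set y := ‖b‖ with hydef
  set t := (a * conj b).re with htdef
  set c := ‖1 + a * conj b‖ with hcdef
  set S := Real.sqrt ((1 + x ^ 2) * (1 + y ^ 2)) with hSdef
  have hx0 : 0 ≤ x := norm_nonneg a
  have hy0 : 0 ≤ y := norm_nonneg b
  have hc0 : 0 ≤ c := norm_nonneg _
  have hS0 : 0 ≤ S := Real.sqrt_nonneg _
  have hS2 : S ^ 2 = (1 + x ^ 2) * (1 + y ^ 2) := by
    rw [hSdef, Real.sq_sqrt]
    positivity
  have hab : ‖a * conj b‖ = x * y := by
    rw [norm_mul, Complex.norm_conj]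
  have hc2 : c ^ 2 = 1 + 2 * t + (x * y) ^ 2 := by
    rw [hcdef, Complex.sq_norm, Complex.normSq_add, Complex.normSq_one]
    have : Complex.normSq (a * conj b) = (x * y) ^ 2 := by
      rw [← Complex.sq_norm, hab]
    rw [this]
    have : (1 * conj (a * conj b)).re = t := by
      rw [one_mul, Complex.conj_re]
    rw [this]; ring
  have ht : -(x * y) ≤ t := by
    rw [htdef]
    have h := (abs_le.mp (Complex.abs_re_le_norm (a * conj b))).1
    rwa [hab] at h
  have hN : ‖a * (1 + (y : ℂ) ^ 2) + b * (1 + (x : ℂ) ^ 2)‖ ^ 2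
      = x ^ 2 * (1 + y ^ 2) ^ 2 + y ^ 2 * (1 + x ^ 2) ^ 2
        + 2 * ((1 + x ^ 2) * (1 + y ^ 2)) * t := by
    rw [Complex.sq_norm, Complex.normSq_add]
    have h1 : Complex.normSq (a * (1 + (y : ℂ) ^ 2)) = x ^ 2 * (1 + y ^ 2) ^ 2 := by
      rw [Complex.normSq_mul, ← Complex.sq_norm a]
      congr 1
      rw [show (1 + (y : ℂ) ^ 2) = ((1 + y ^ 2 : ℝ) : ℂ) by push_cast; ring,
        Complex.normSq_ofReal]; ring
    have h2 : Complex.normSq (b * (1 + (x : ℂ) ^ 2)) = y ^ 2 * (1 + x ^ 2) ^ 2 := by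
      rw [Complex.normSq_mul, ← Complex.sq_norm b]
      congr 1
      rw [show (1 + (x : ℂ) ^ 2) = ((1 + x ^ 2 : ℝ) : ℂ) by push_cast; ring,
        Complex.normSq_ofReal]; ring
    have h3 : (a * (1 + (y : ℂ) ^ 2) * conj (b * (1 + (x : ℂ) ^ 2))).re
        = (1 + x ^ 2) * (1 + y ^ 2) * t := by
      rw [show (1 + (y : ℂ) ^ 2) = ((1 + y ^ 2 : ℝ) : ℂ) by push_cast; ring,
        show (1 + (x : ℂ) ^ 2) = ((1 + x ^ 2 : ℝ) : ℂ) by push_cast; ring]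
      rw [map_mul, Complex.conj_ofReal]
      have : a * ((1 + y ^ 2 : ℝ) : ℂ) * (conj b * ((1 + x ^ 2 : ℝ) : ℂ))
          = (((1 + x ^ 2) * (1 + y ^ 2) : ℝ) : ℂ) * (a * conj b) := by
        push_cast; ring
      rw [this, Complex.re_ofReal_mul]
    rw [h1, h2, h3]; ring
  -- lower bounds
  have hu1 : x * y < 1 := by nlinarith [mul_le_mul ha.le hb.le hy0 zero_le_one]
  have hcp : (0:ℝ) ≤ c + (1 - x * y) := by nlinarith
  have hcl : 1 - x * y ≤ c := by nlinarith [hc2, ht, hcp]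
  have hSp : (0:ℝ) ≤ S + (1 + x * y) := by nlinarith [mul_nonneg hx0 hy0]
  have hSl : 1 + x * y ≤ S := by
    rw [hSdef, show (1 + x ^ 2) * (1 + y ^ 2) = (1+x*y)^2 + (x-y)^2 by ring]
    calc 1 + x*y = Real.sqrt ((1+x*y)^2) := (Real.sqrt_sq (by positivity)).symm
    _ ≤ _ := Real.sqrt_le_sqrt (by nlinarith [sq_nonneg (x-y)])
  have habxy : ‖a * b‖ = x * y := by rw [norm_mul]
  rw [hm, habxy]
  set D : ℝ := c * S - (x * y) ^ 2 + 1 with hDdef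
  have hD0 : 0 < D := by nlinarith [mul_le_mul hcl hSl (by nlinarith) hc0]
  rw [norm_div, Complex.norm_real, Real.norm_eq_abs, abs_of_pos hD0, div_lt_one hD0]
  have hcS : (c * S) ^ 2 = (1 + 2 * t + (x * y) ^ 2) * ((1 + x ^ 2) * (1 + y ^ 2)) := by
    rw [mul_pow, hc2, hS2]
  have hkey : ‖a * (1 + (y : ℂ) ^ 2) + b * (1 + (x : ℂ) ^ 2)‖ ^ 2 < D ^ 2 := by
    have hpos : 0 < 1 - (x * y) ^ 2 := by nlinarith [mul_nonneg hx0 hy0]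
    nlinarith [mul_nonneg (mul_nonneg hc0 hS0) hpos.le, sq_nonneg (1 - (x*y)^2)]
  calc ‖a * (1 + (y : ℂ) ^ 2) + b * (1 + (x : ℂ) ^ 2)‖
      = Real.sqrt (‖a * (1 + (y : ℂ) ^ 2) + b * (1 + (x : ℂ) ^ 2)‖ ^ 2) := by
        rw [Real.sqrt_sq (norm_nonneg _)]
    _ < D := by
        rw [show D = Real.sqrt (D ^ 2) by rw [Real.sqrt_sq hD0.le]]
        exact Real.sqrt_lt_sqrt (sq_nonneg _) hkey
end

section
/- Let a, b, c, d ∈ ℂ be four distinct points, not all lying on one line with |a-b| = |c-d|. Set k₀ = (b-c)(a-d) and k₁ = (a-c)(b-d) + (a-b)(c-d), and assume k₀ ≠ 0. Let y be a root of k₀y² + 2k₁y + k₀ = 0, and define p = -((b-c)y + a-d)/(a-b-c+d), q = ((b-c)(a+d)y + (b+c)(a-d))/(2(a-b-c+d)), s = -((b+c)(a-d)y + (b-c)(a+d))/(2((a-d)y + (b-c))). Then the Möbius transformation h(z) = (pz + q)/(z + s) satisfies h(a) = -1, h(b) = y, h(c) = -y, h(d) = 1. -/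
/-- Symmetrization lemma: the Möbius transformation `h(z) = (pz + q)/(z + s)`
with the given coefficients maps `a, b, c, d` to `-1, y, -y, 1`. -/
theorem stmt15 (a b c d y : ℂ)
    (hab : a ≠ b) (hac : a ≠ c) (had : a ≠ d)
    (hbc : b ≠ c) (hbd : b ≠ d) (hcd : c ≠ d)
    (hk0 : (b - c) * (a - d) ≠ 0)
    (hroot : (b - c) * (a - d) * y ^ 2 +
      2 * ((a - c) * (b - d) + (a - b) * (c - d)) * y + (b - c) * (a - d) = 0)
    (hden1 : a - b - c + d ≠ 0)
    (hden2 : (a - d) * y + (b - c) ≠ 0)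
    (p q s : ℂ)
    (hp : p = -(((b - c) * y + a - d) / (a - b - c + d)))
    (hq : q = ((b - c) * (a + d) * y + (b + c) * (a - d)) / (2 * (a - b - c + d)))
    (hs : s = -(((b + c) * (a - d) * y + (b - c) * (a + d)) /
      (2 * ((a - d) * y + (b - c))))) :
    (p * a + q) / (a + s) = -1 ∧
    (p * b + q) / (b + s) = y ∧
    (p * c + q) / (c + s) = -y ∧
    (p * d + q) / (d + s) = 1 := by
  have h4 : (4:ℂ) ≠ 0 := by norm_num
  have hab' := sub_ne_zero.mpr hab
  have hac' := sub_ne_zero.mpr hac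
  have had' := sub_ne_zero.mpr had
  have hbc' := sub_ne_zero.mpr hbc
  have hbd' := sub_ne_zero.mpr hbd
  have hcd' := sub_ne_zero.mpr hcd
  -- the four linear forms appearing in the denominators are nonzero
  have hNa : (2*a - b - c) * y + (b - c) ≠ 0 := by
    intro h
    have hres : (4:ℂ) * (a-b) * (a-c) * (a-b-c+d) * (b-c) = 0 := by
      linear_combination (2*a-b-c)^2 * hroot -
        ((b-c)*(a-d)*((2*a-b-c)*y+(b-c)) - 2*(b-c)*(a-d)*(b-c) +
          2*((a-c)*(b-d)+(a-b)*(c-d))*(2*a-b-c)) * h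
    exact (mul_ne_zero (mul_ne_zero (mul_ne_zero (mul_ne_zero h4 hab') hac') hden1) hbc') hres
  have hNb : (a - d) * y + (2*b - a - d) ≠ 0 := by
    intro h
    have hres : (4:ℂ) * (a-b) * (a-d) * (b-d) * (a-b-c+d) = 0 := by
      linear_combination (a-d)^2 * hroot -
        ((b-c)*(a-d)*((a-d)*y+(2*b-a-d)) - 2*(b-c)*(a-d)*(2*b-a-d) +
          2*((a-c)*(b-d)+(a-b)*(c-d))*(a-d)) * h
    exact (mul_ne_zero (mul_ne_zero (mul_ne_zero (mul_ne_zero h4 hab') had') hbd') hden1) hres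
  have hNc : (a - d) * y + (a + d - 2*c) ≠ 0 := by
    intro h
    have hres : (4:ℂ) * (a-c) * (a-d) * (c-d) * (a-b-c+d) = 0 := by
      linear_combination (-(a-d)^2) * hroot +
        ((b-c)*(a-d)*((a-d)*y+(a+d-2*c)) - 2*(b-c)*(a-d)*(a+d-2*c) +
          2*((a-c)*(b-d)+(a-b)*(c-d))*(a-d)) * h
    exact (mul_ne_zero (mul_ne_zero (mul_ne_zero (mul_ne_zero h4 hac') had') hcd') hden1) hres
  have hNd : (2*d - b - c) * y - (b - c) ≠ 0 := by
    intro h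
    have hres : (4:ℂ) * (b-c) * (b-d) * (c-d) * (a-b-c+d) = 0 := by
      linear_combination (-(2*d-b-c)^2) * hroot +
        ((b-c)*(a-d)*((2*d-b-c)*y-(b-c)) + 2*(b-c)*(a-d)*(b-c) +
          2*((a-c)*(b-d)+(a-b)*(c-d))*(2*d-b-c)) * h
    exact (mul_ne_zero (mul_ne_zero (mul_ne_zero (mul_ne_zero h4 hbc') hbd') hcd') hden1) hres
  have h2D2 : (2:ℂ) * ((a - d) * y + (b - c)) ≠ 0 := mul_ne_zero two_ne_zero hden2
  -- the four denominators are nonzero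
  have hA : a + s ≠ 0 := by
    have e : a + s = (a-d)*((2*a-b-c)*y+(b-c))/(2*((a-d)*y+(b-c))) := by
      rw [hs]; field_simp; ring
    rw [e]; exact div_ne_zero (mul_ne_zero had' hNa) h2D2
  have hB : b + s ≠ 0 := by
    have e : b + s = (b-c)*((a-d)*y+(2*b-a-d))/(2*((a-d)*y+(b-c))) := by
      rw [hs]; field_simp; ring
    rw [e]; exact div_ne_zero (mul_ne_zero hbc' hNb) h2D2
  have hC : c + s ≠ 0 := by
    have e : c + s = -((b-c)*((a-d)*y+(a+d-2*c)))/(2*((a-d)*y+(b-c))) := by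
      rw [hs]; field_simp; ring
    rw [e]
    exact div_ne_zero (neg_ne_zero.mpr (mul_ne_zero hbc' hNc)) h2D2
  have hD : d + s ≠ 0 := by
    have e : d + s = (a-d)*((2*d-b-c)*y-(b-c))/(2*((a-d)*y+(b-c))) := by
      rw [hs]; field_simp; ring
    rw [e]; exact div_ne_zero (mul_ne_zero had' hNd) h2D2
  have hden2' : y * (a - d) + (b - c) ≠ 0 := by rwa [mul_comm]
  refine ⟨?_, ?_, ?_, ?_⟩
  · rw [div_eq_iff hA, hp, hq, hs]
    field_simp
    linear_combination (-(a-d)) * hroot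
  · rw [div_eq_iff hB, hp, hq, hs]
    field_simp
    linear_combination (-(b-c)) * hroot
  · rw [div_eq_iff hC, hp, hq, hs]
    field_simp
    linear_combination (b-c) * hroot
  · rw [div_eq_iff hD, hp, hq, hs]
    field_simp
    linear_combination (a-d) * hroot
end

section
/- Let a, b, c, d be four distinct points on the unit circle in ℂ listed in positive (counterclockwise) order, and assume a - b + c - d ≠ 0. Then the point w₄ = ((ac - bd) ± √((a-b)(b-c)(c-d)(d-a)))/(a - b + c - d), with the sign chosen so that |w₄| < 1, is the intersection point of the hyperbolic lines J*[a,c] and J*[b,d] in the unit disk; in particular, w₄ lies on both the circle through a and c orthogonal to the unit circle and the circle through b and d orthogonal to the unit circle. -/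
/-- `w` lies on the hyperbolic geodesic line `J*[x,y]` of the Poincaré disk
model: either `x, y` are collinear with `0` and `w` lies on the diameter through
them, or `w` lies on the circle through `x` and `y` orthogonal to the unit
circle (a circle `S¹(z, r)` is orthogonal to `S¹` iff `|z|² = 1 + r²`). -/
def onHypLine (x y w : ℂ) : Prop :=
  (Collinear ℝ ({0, x, y} : Set ℂ) ∧ Collinear ℝ ({x, y, w} : Set ℂ)) ∨
  (∃ z : ℂ, ∃ r : ℝ, 0 < r ∧
    ‖x - z‖ = r ∧ ‖y - z‖ = r ∧ ‖w - z‖ = r ∧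
    ‖z‖ ^ 2 = 1 + r ^ 2)

set_option maxHeartbeats 1000000

open Complex

lemma conj_eq_inv {x : ℂ} (hx : ‖x‖ = 1) : (starRingEnd ℂ) x = x⁻¹ := by
  have h1 : x * (starRingEnd ℂ) x = 1 := by
    rw [Complex.mul_conj]
    norm_cast
    rw [Complex.normSq_eq_norm_sq, hx]; norm_num
  exact (inv_eq_of_mul_eq_one_right h1).symm

lemma expDiff (x y : ℝ) :
    Complex.exp (x*Complex.I) - Complex.exp (y*Complex.I)
      = Complex.exp ((((x+y)/2 : ℝ))*Complex.I) * (2*Complex.I*((Real.sin ((x-y)/2) : ℝ) : ℂ)) := by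
  have h1 : (x:ℂ)*I = (((x+y)/2 :ℝ):ℂ)*I + (((x-y)/2 : ℝ):ℂ)*I := by push_cast; ring
  have h2 : (y:ℂ)*I = (((x+y)/2 :ℝ):ℂ)*I - (((x-y)/2 : ℝ):ℂ)*I := by push_cast; ring
  rw [h1, h2, Complex.exp_add, Complex.exp_sub]
  rw [Complex.ofReal_sin, Complex.sin]
  have hne : Complex.exp ((((x-y)/2 : ℝ):ℂ)*I) ≠ 0 := Complex.exp_ne_zero _
  rw [show (-(((x-y)/2 : ℝ):ℂ) * I) = -((((x-y)/2 : ℝ):ℂ) * I) by ring, Complex.exp_neg,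
    div_eq_mul_inv]
  have key : ∀ A E : ℂ, A*E - A*E⁻¹ = A * (2*I*((E⁻¹ - E)*I/2)) := by
    intro A E; linear_combination (A*(E - E⁻¹)) * Complex.I_sq
  exact key _ _

lemma expNe {x y : ℝ} (h1 : x < y) (h2 : y < x + 2*Real.pi) :
    Complex.exp (x*Complex.I) ≠ Complex.exp (y*Complex.I) := by
  intro h
  rw [Complex.exp_eq_exp_iff_exists_int] at h
  obtain ⟨n, hn⟩ := h
  have h3 : ((x:ℂ) - y - n*(2*Real.pi)) * Complex.I = 0 := by
    linear_combination hn
  rcases mul_eq_zero.1 h3 with h4 | h4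
  · have h5 : (x:ℝ) = y + n*(2*Real.pi) := by
      have : ((x:ℂ)) = (y:ℂ) + (n:ℂ)*(2*Real.pi) := by linear_combination h4
      exact_mod_cast this
    have hpi : (0:ℝ) < 2*Real.pi := by positivity
    have hneg : (n:ℝ) < 0 := by nlinarith
    have hneg' : n < 0 := by exact_mod_cast hneg
    have hle : (n:ℝ) ≤ -1 := by exact_mod_cast (by omega : n ≤ -1)
    nlinarith
  · exact Complex.I_ne_zero h4

lemma onLine_of_key {x y p : ℂ} (hx : ‖x‖ = 1) (hy : ‖y‖ = 1)
    (hxy : x ≠ y)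
    (key : 2 * (p + x * y * (starRingEnd ℂ) p) = (1 + p * (starRingEnd ℂ) p) * (x + y)) :
    onHypLine x y p := by
  have hx0 : x ≠ 0 := fun h => by simp [h] at hx
  have hy0 : y ≠ 0 := fun h => by simp [h] at hy
  have hcx : (starRingEnd ℂ) x = x⁻¹ := conj_eq_inv hx
  have hcy : (starRingEnd ℂ) y = y⁻¹ := conj_eq_inv hy
  by_cases hs : x + y = 0
  · left
    have hyx : y = -x := by linear_combination hs
    have hp : p = x^2 * (starRingEnd ℂ) p := by
      linear_combination ((1:ℂ)/2) * key +
        (-(x * (starRingEnd ℂ) p) + (1 + p * (starRingEnd ℂ) p)/2) * hs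
    have hux : (starRingEnd ℂ) (p * x⁻¹) = p * x⁻¹ := by
      rw [map_mul, map_inv₀, hcx, inv_inv]
      field_simp
      linear_combination -hp
    obtain ⟨t, ht⟩ : ∃ t : ℝ, p = (t:ℂ) * x := by
      refine ⟨(p * x⁻¹).re, ?_⟩
      have := (Complex.conj_eq_iff_re).1 hux
      field_simp at this ⊢
      linear_combination -this
    constructor
    · rw [collinear_iff_exists_forall_eq_smul_vadd]
      refine ⟨0, x, ?_⟩
      intro q hq
      simp only [Set.mem_insert_iff, Set.mem_singleton_iff] at hq
      rcases hq with rfl | rfl | rfl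
      · exact ⟨0, by simp⟩
      · exact ⟨1, by simp⟩
      · exact ⟨-1, by simp [hyx, Complex.real_smul]⟩
    · rw [collinear_iff_exists_forall_eq_smul_vadd]
      refine ⟨0, x, ?_⟩
      intro q hq
      simp only [Set.mem_insert_iff, Set.mem_singleton_iff] at hq
      rcases hq with rfl | rfl | rfl
      · exact ⟨1, by simp⟩
      · exact ⟨-1, by simp [hyx, Complex.real_smul]⟩
      · exact ⟨t, by simp [ht, Complex.real_smul]⟩
  · right
    refine ⟨2*x*y/(x+y), ‖x - 2*x*y/(x+y)‖, ?_, rfl, ?_, ?_, ?_⟩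
    · have hxz : x - 2*x*y/(x+y) = x*(x-y)/(x+y) := by field_simp; ring
      rw [hxz]
      have : x*(x-y)/(x+y) ≠ 0 := by
        apply div_ne_zero (mul_ne_zero hx0 (sub_ne_zero.2 hxy)) hs
      exact norm_pos_iff.2 this
    · have hxz : x - 2*x*y/(x+y) = x*(x-y)/(x+y) := by field_simp; ring
      have hyz : y - 2*x*y/(x+y) = y*(y-x)/(x+y) := by field_simp; ring
      rw [hxz, hyz, norm_div, norm_div, norm_mul, norm_mul, hx, hy, norm_sub_rev x y]
    · have hcz : (starRingEnd ℂ) (2*x*y/(x+y)) = 2/(x+y) := by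
        rw [map_div₀, map_add, map_mul, map_mul, hcx, hcy, map_ofNat]
        field_simp [hs]
        rw [show y + x = x + y from add_comm y x, div_self hs]
      have hmain : (p - 2*x*y/(x+y)) * (starRingEnd ℂ) (p - 2*x*y/(x+y))
          = (x - 2*x*y/(x+y)) * (starRingEnd ℂ) (x - 2*x*y/(x+y)) := by
        rw [map_sub, map_sub, hcz, hcx]
        field_simp [hs]
        linear_combination (-(x+y)) * key
      have h2 : Complex.normSq (p - 2*x*y/(x+y)) = Complex.normSq (x - 2*x*y/(x+y)) := by
        have := hmain
        rw [Complex.mul_conj, Complex.mul_conj] at this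
        exact_mod_cast this
      rw [Complex.norm_def, Complex.norm_def, h2]
    · have hcz : (starRingEnd ℂ) (2*x*y/(x+y)) = 2/(x+y) := by
        rw [map_div₀, map_add, map_mul, map_mul, hcx, hcy, map_ofNat]
        field_simp [hs]
        rw [show y + x = x + y from add_comm y x, div_self hs]
      have hmain : (2*x*y/(x+y)) * (starRingEnd ℂ) (2*x*y/(x+y))
          = 1 + (x - 2*x*y/(x+y)) * (starRingEnd ℂ) (x - 2*x*y/(x+y)) := by
        rw [map_sub, hcz, hcx]
        field_simp [hs]
        ring_nf
      have h2 : Complex.normSq (2*x*y/(x+y)) = 1 + Complex.normSq (x - 2*x*y/(x+y)) := by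
        have := hmain
        rw [Complex.mul_conj, Complex.mul_conj] at this
        exact_mod_cast this
      rw [Complex.sq_norm, Complex.sq_norm, h2]

/-- For four distinct points `a, b, c, d` on the unit circle in positive order,
the point `w₄ = ((ac - bd) ± √((a-b)(b-c)(c-d)(d-a)))/(a - b + c - d)`, with the
sign chosen so that `|w₄| < 1`, is the intersection of the hyperbolic lines
`J*[a,c]` and `J*[b,d]`. -/
theorem stmt19 (t₁ t₂ t₃ t₄ : ℝ) (a b c d : ℂ)
    (hA : a = Complex.exp (t₁ * Complex.I))
    (hB : b = Complex.exp (t₂ * Complex.I))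
    (hC : c = Complex.exp (t₃ * Complex.I))
    (hD : d = Complex.exp (t₄ * Complex.I))
    (h12 : t₁ < t₂) (h23 : t₂ < t₃) (h34 : t₃ < t₄) (h41 : t₄ < t₁ + 2 * Real.pi)
    (hden : a - b + c - d ≠ 0)
    (w : ℂ) (hw : w ^ 2 = (a - b) * (b - c) * (c - d) * (d - a)) :
    ∃ ε : ℂ, (ε = 1 ∨ ε = -1) ∧
      ‖(a * c - b * d + ε * w) / (a - b + c - d)‖ < 1 ∧
      onHypLine a c ((a * c - b * d + ε * w) / (a - b + c - d)) ∧
      onHypLine b d ((a * c - b * d + ε * w) / (a - b + c - d)) := by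
  have habsa : ‖a‖ = 1 := by rw [hA]; exact Complex.norm_exp_ofReal_mul_I t₁
  have habsb : ‖b‖ = 1 := by rw [hB]; exact Complex.norm_exp_ofReal_mul_I t₂
  have habsc : ‖c‖ = 1 := by rw [hC]; exact Complex.norm_exp_ofReal_mul_I t₃
  have habsd : ‖d‖ = 1 := by rw [hD]; exact Complex.norm_exp_ofReal_mul_I t₄
  have ha0 : a ≠ 0 := fun h => by simp [h] at habsa
  have hb0 : b ≠ 0 := fun h => by simp [h] at habsb
  have hc0 : c ≠ 0 := fun h => by simp [h] at habsc
  have hd0 : d ≠ 0 := fun h => by simp [h] at habsd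
  have hca : (starRingEnd ℂ) a = a⁻¹ := conj_eq_inv habsa
  have hcb : (starRingEnd ℂ) b = b⁻¹ := conj_eq_inv habsb
  have hcc : (starRingEnd ℂ) c = c⁻¹ := conj_eq_inv habsc
  have hcd : (starRingEnd ℂ) d = d⁻¹ := conj_eq_inv habsd
  have hab : a ≠ b := by rw [hA, hB]; exact expNe h12 (by linarith)
  have hbc : b ≠ c := by rw [hB, hC]; exact expNe h23 (by linarith)
  have hcd' : c ≠ d := by rw [hC, hD]; exact expNe h34 (by linarith)
  have hac : a ≠ c := by rw [hA, hC]; exact expNe (by linarith) (by linarith)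
  have hbd : b ≠ d := by rw [hB, hD]; exact expNe (by linarith) (by linarith)
  have had : a ≠ d := by rw [hA, hD]; exact expNe (by linarith) (by linarith)
  have hs0 : a*b*c*d ≠ 0 := by
    exact mul_ne_zero (mul_ne_zero (mul_ne_zero ha0 hb0) hc0) hd0
  have habss : ‖a*b*c*d‖ = 1 := by
    rw [norm_mul, norm_mul, norm_mul, habsa, habsb, habsc, habsd]; norm_num
  have hPine : (a - b) * (b - c) * (c - d) * (d - a) ≠ 0 := by
    refine mul_ne_zero (mul_ne_zero (mul_ne_zero ?_ ?_) ?_) ?_ <;>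
      [exact sub_ne_zero.2 hab; exact sub_ne_zero.2 hbc; exact sub_ne_zero.2 hcd';
       exact sub_ne_zero.2 (Ne.symm had)]
  have hwne : w ≠ 0 := by
    intro h
    rw [h] at hw
    exact hPine (hw.symm.trans (by norm_num))
  -- product of sines
  have hPi : (a - b) * (b - c) * (c - d) * (d - a)
      = 16 * (((Real.sin ((t₁-t₂)/2) : ℝ):ℂ) * ((Real.sin ((t₂-t₃)/2) : ℝ):ℂ) *
          ((Real.sin ((t₃-t₄)/2) : ℝ):ℂ) * ((Real.sin ((t₄-t₁)/2) : ℝ):ℂ)) * (a*b*c*d) := by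
    rw [hA, hB, hC, hD, expDiff t₁ t₂, expDiff t₂ t₃, expDiff t₃ t₄, expDiff t₄ t₁]
    have hexp : Complex.exp ((((t₁+t₂)/2 :ℝ):ℂ)*I) * Complex.exp ((((t₂+t₃)/2:ℝ):ℂ)*I) *
        Complex.exp ((((t₃+t₄)/2:ℝ):ℂ)*I) * Complex.exp ((((t₄+t₁)/2:ℝ):ℂ)*I)
        = Complex.exp ((t₁:ℂ)*I) * Complex.exp ((t₂:ℂ)*I) * Complex.exp ((t₃:ℂ)*I) *
          Complex.exp ((t₄:ℂ)*I) := by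
      rw [← Complex.exp_add, ← Complex.exp_add, ← Complex.exp_add, ← Complex.exp_add,
        ← Complex.exp_add, ← Complex.exp_add]
      congr 1
      push_cast; ring
    have hI4 : (Complex.I)^4 = 1 := by
      rw [show (4:ℕ) = 2*2 from rfl, pow_mul, Complex.I_sq]; norm_num
    linear_combination (16*((Real.sin ((t₁-t₂)/2) :ℝ):ℂ)*((Real.sin ((t₂-t₃)/2) :ℝ):ℂ)*
        ((Real.sin ((t₃-t₄)/2) :ℝ):ℂ)*((Real.sin ((t₄-t₁)/2) :ℝ):ℂ)) * hexp +
      (16*((Real.sin ((t₁-t₂)/2) :ℝ):ℂ)*((Real.sin ((t₂-t₃)/2) :ℝ):ℂ)*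
        ((Real.sin ((t₃-t₄)/2) :ℝ):ℂ)*((Real.sin ((t₄-t₁)/2) :ℝ):ℂ) *
        (Complex.exp ((((t₁+t₂)/2 :ℝ):ℂ)*I) * Complex.exp ((((t₂+t₃)/2:ℝ):ℂ)*I) *
         Complex.exp ((((t₃+t₄)/2:ℝ):ℂ)*I) * Complex.exp ((((t₄+t₁)/2:ℝ):ℂ)*I))) * hI4
  have hpi2 : t₂ - t₁ < 2*Real.pi := by linarith
  have hs1 : Real.sin ((t₁-t₂)/2) < 0 := by
    have h := Real.sin_pos_of_pos_of_lt_pi (x := (t₂-t₁)/2) (by linarith) (by linarith)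
    rw [show (t₁-t₂)/2 = -((t₂-t₁)/2) by ring, Real.sin_neg]; linarith
  have hs2 : Real.sin ((t₂-t₃)/2) < 0 := by
    have h := Real.sin_pos_of_pos_of_lt_pi (x := (t₃-t₂)/2) (by linarith) (by linarith)
    rw [show (t₂-t₃)/2 = -((t₃-t₂)/2) by ring, Real.sin_neg]; linarith
  have hs3 : Real.sin ((t₃-t₄)/2) < 0 := by
    have h := Real.sin_pos_of_pos_of_lt_pi (x := (t₄-t₃)/2) (by linarith) (by linarith)
    rw [show (t₃-t₄)/2 = -((t₄-t₃)/2) by ring, Real.sin_neg]; linarith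
  have hs4 : 0 < Real.sin ((t₄-t₁)/2) :=
    Real.sin_pos_of_pos_of_lt_pi (by linarith) (by linarith)
  set R : ℝ := Real.sin ((t₁-t₂)/2) * Real.sin ((t₂-t₃)/2) * Real.sin ((t₃-t₄)/2) *
      Real.sin ((t₄-t₁)/2) with hRdef
  have hRneg : R < 0 := by
    have h12' : 0 < Real.sin ((t₁-t₂)/2) * Real.sin ((t₂-t₃)/2) := mul_pos_of_neg_of_neg hs1 hs2
    have h123 : Real.sin ((t₁-t₂)/2) * Real.sin ((t₂-t₃)/2) * Real.sin ((t₃-t₄)/2) < 0 :=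
      mul_neg_of_pos_of_neg h12' hs3
    exact mul_neg_of_neg_of_pos h123 hs4
  have hPiR : (a - b) * (b - c) * (c - d) * (d - a) = 16 * ((R:ℝ):ℂ) * (a*b*c*d) := by
    rw [hPi, hRdef]
    push_cast
    ring
  have habsw2 : ‖w‖ ^ 2 = -(16*R) := by
    have h1 : ‖w‖ ^ 2 = ‖w^2‖ := by rw [norm_pow]
    rw [h1, hw, hPiR, norm_mul, norm_mul, Complex.norm_real, Real.norm_eq_abs, habss, abs_of_neg hRneg]
    norm_num
  have hw2' : w^2 = 16 * ((R:ℝ):ℂ) * (a*b*c*d) := hw.trans hPiR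
  have hcw : (starRingEnd ℂ) w = -(w/(a*b*c*d)) := by
    have hcww : w * (starRingEnd ℂ) w = ((-(16*R) : ℝ):ℂ) := by
      rw [Complex.mul_conj]
      norm_cast
      rw [Complex.normSq_eq_norm_sq, habsw2]
    have h3 : w * ((starRingEnd ℂ) w * (a*b*c*d)) = w * (-w) := by
      rw [← mul_assoc, hcww]
      push_cast
      linear_combination hw2'
    have h4 := mul_left_cancel₀ hwne h3
    field_simp [hs0]
    linear_combination h4
  have hcD : (starRingEnd ℂ) (a-b+c-d) ≠ 0 := by
    intro h
    have h2 := congrArg (starRingEnd ℂ) h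
    rw [Complex.conj_conj, map_zero] at h2
    exact hden h2
  have hD'ne : (b*c*d-a*c*d+a*b*d-a*b*c : ℂ) ≠ 0 := by
    have heq : (b*c*d-a*c*d+a*b*d-a*b*c : ℂ) = (a*b*c*d) * (starRingEnd ℂ) (a-b+c-d) := by
      simp only [map_sub, map_add, hca, hcb, hcc, hcd]
      field_simp
    rw [heq]; exact mul_ne_zero hs0 hcD
  have hconjp : ∀ ε : ℂ, ε = 1 ∨ ε = -1 →
      (starRingEnd ℂ) ((a*c-b*d+ε*w)/(a-b+c-d))
        = (b*d-a*c-ε*w)/(b*c*d-a*c*d+a*b*d-a*b*c) := by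
    intro ε hε
    have hce : (starRingEnd ℂ) ε = ε := by rcases hε with rfl | rfl <;> simp
    simp only [map_div₀, map_sub, map_add, map_mul, hca, hcb, hcc, hcd, hcw, hce]
    have e1 : (a⁻¹*c⁻¹ - b⁻¹*d⁻¹ + ε * -(w/(a*b*c*d)) : ℂ)
        = (b*d - a*c - ε*w)/(a*b*c*d) := by
      field_simp [ha0, hb0, hc0, hd0]
      ring
    have e2 : (a⁻¹ - b⁻¹ + c⁻¹ - d⁻¹ : ℂ)
        = (b*c*d-a*c*d+a*b*d-a*b*c)/(a*b*c*d) := by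
      field_simp [ha0, hb0, hc0, hd0]
    rw [e1, e2, div_div_div_comm, div_self hs0, div_one]
  have hD3 : d*(c*(b-a)+a*b) - a*c*b ≠ 0 := by
    intro h; apply hD'ne; linear_combination h
  have keyac : ∀ ε : ℂ, ε = 1 ∨ ε = -1 →
      2 * ((a*c-b*d+ε*w)/(a-b+c-d) + a*c*(starRingEnd ℂ) ((a*c-b*d+ε*w)/(a-b+c-d)))
        = (1 + (a*c-b*d+ε*w)/(a-b+c-d) * (starRingEnd ℂ) ((a*c-b*d+ε*w)/(a-b+c-d)))*(a+c) := by
    intro ε hε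
    rw [hconjp ε hε]
    rcases hε with rfl | rfl <;>
    · field_simp [hden, hD'ne, hD3]
      linear_combination (a+c) * hw
  have keybd : ∀ ε : ℂ, ε = 1 ∨ ε = -1 →
      2 * ((a*c-b*d+ε*w)/(a-b+c-d) + b*d*(starRingEnd ℂ) ((a*c-b*d+ε*w)/(a-b+c-d)))
        = (1 + (a*c-b*d+ε*w)/(a-b+c-d) * (starRingEnd ℂ) ((a*c-b*d+ε*w)/(a-b+c-d)))*(b+d) := by
    intro ε hε
    rw [hconjp ε hε]
    rcases hε with rfl | rfl <;>
    · field_simp [hden, hD'ne, hD3]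
      linear_combination (b+d) * hw
  have habsne : ∀ ε : ℂ, ε = 1 ∨ ε = -1 →
      ‖(a*c-b*d+ε*w)/(a-b+c-d)‖ ≠ 1 := by
    intro ε hε h1
    have k1 := keyac ε hε
    have k2 := keybd ε hε
    set p := (a*c-b*d+ε*w)/(a-b+c-d) with hpdef
    have hp0 : p ≠ 0 := by intro h; rw [h] at h1; simp at h1
    have hpq : p * (starRingEnd ℂ) p = 1 := by
      rw [Complex.mul_conj]
      norm_cast
      rw [Complex.normSq_eq_norm_sq, h1]; norm_num
    have hqi : (starRingEnd ℂ) p = p⁻¹ := (inv_eq_of_mul_eq_one_right hpq).symm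
    rw [hpq, hqi] at k1 k2
    have hfac : (p - a)*(p - c) = 0 := by
      field_simp at k1
      linear_combination k1 / 2
    have hfbd : (p - b)*(p - d) = 0 := by
      field_simp at k2
      linear_combination k2 / 2
    rcases mul_eq_zero.1 hfac with h | h <;> rcases mul_eq_zero.1 hfbd with h' | h'
    · exact hab ((sub_eq_zero.1 h).symm.trans (sub_eq_zero.1 h'))
    · exact had ((sub_eq_zero.1 h).symm.trans (sub_eq_zero.1 h'))
    · exact hbc ((sub_eq_zero.1 h').symm.trans (sub_eq_zero.1 h))
    · exact hcd' ((sub_eq_zero.1 h).symm.trans (sub_eq_zero.1 h'))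
  have hinv : ((a*c-b*d+1*w)/(a-b+c-d)) * (starRingEnd ℂ) ((a*c-b*d+(-1)*w)/(a-b+c-d)) = 1 := by
    rw [hconjp (-1) (Or.inr rfl)]
    rw [div_mul_div_comm, div_eq_one_iff_eq (mul_ne_zero hden hD'ne)]
    linear_combination hw
  by_cases hlt : ‖(a*c-b*d+1*w)/(a-b+c-d)‖ < 1
  · exact ⟨1, Or.inl rfl, hlt,
      onLine_of_key habsa habsc hac (keyac 1 (Or.inl rfl)),
      onLine_of_key habsb habsd hbd (keybd 1 (Or.inl rfl))⟩
  · refine ⟨-1, Or.inr rfl, ?_,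
      onLine_of_key habsa habsc hac (keyac (-1) (Or.inr rfl)),
      onLine_of_key habsb habsd hbd (keybd (-1) (Or.inr rfl))⟩
    have hprod : ‖(a*c-b*d+1*w)/(a-b+c-d)‖ *
        ‖(a*c-b*d+(-1)*w)/(a-b+c-d)‖ = 1 := by
      have h := congrArg (fun z => ‖z‖) hinv
      rwa [norm_mul, norm_one, Complex.norm_conj] at h
    have h1 := habsne 1 (Or.inl rfl)
    have h2 : 1 < ‖(a*c-b*d+1*w)/(a-b+c-d)‖ :=
      lt_of_le_of_ne (not_lt.1 hlt) (Ne.symm h1)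
    nlinarith [norm_nonneg ((a*c-b*d+(-1)*w)/(a-b+c-d))]
end
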